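/- Let (Γ_n)_{n≥0} be an inhomogeneous Galton–Watson process: Γ_{n+1} = ∑_{k=1}^{Γ_n} ν_n^{(k)}, where for each n the ν_n^{(k)} (k ≥ 1) are i.i.d. copies of a nonnegative integer random variable ν_n, independent of the process up to time n, with mean m_n = E[ν_n] ∈ (0,∞). Fix α > 1 and n ≥ 1, and suppose that for all 0 ≤ i < n there exists λ_i > 0 with E[e^{λ_i ν_i}] ≤ e^{α λ_i m_i}. Then for all δ > 0 and all integers ℓ ≥ 1, P(Γ_n ≥ ℓ · max{1, (α+δ)^n max_{0≤i<n} ∏_{j=i}^{n-1} m_j} | Γ_0 = ℓ) ≤ n · exp(-(δℓ/(α+δ)) min_{0≤i<n} λ_i + max_{0≤i<n} λ_i). -/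

import Mathlib

open MeasureTheory ProbabilityTheory

lemma meas_sum_range' {Ω : Type*} {m : MeasurableSpace Ω}
    (f : Ω → ℕ) (hf : Measurable f) (u : ℕ → Ω → ℕ) (hu : ∀ k, Measurable (u k)) :
    Measurable fun ω => ∑ k ∈ Finset.range (f ω), u k ω := by
  have h : (fun ω => ∑ k ∈ Finset.range (f ω), u k ω)
      = (fun p : Ω × ℕ => ∑ k ∈ Finset.range p.2, u k p.1) ∘ (fun ω => (ω, f ω)) := rfl
  rw [h]
  exact (measurable_from_prod_countable_left
    (fun g => by simpa using Finset.measurable_sum (Finset.range g) (fun k _ => hu k))).comp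
    (measurable_id.prodMk hf)

lemma helper_ineq' {α δ q : ℝ} (hα : 1 < α) (hδ : 0 < δ) (hq : 0 < q) :
    α * q + δ / (α + δ) ≤ max 1 ((α + δ) * q) := by
  have hβ : 0 < α + δ := by linarith
  rcases le_or_gt (1 / (α + δ)) q with h | h
  · refine le_trans ?_ (le_max_right _ _)
    rw [div_le_iff₀ hβ] at h
    have h1 : δ / (α + δ) ≤ δ * q := by
      rw [div_le_iff₀ hβ]
      nlinarith
    nlinarith
  · refine le_trans ?_ (le_max_left _ _)
    rw [lt_div_iff₀ hβ] at h
    have h2 : α * q < α / (α + δ) := by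
      rw [lt_div_iff₀ hβ]; nlinarith
    have h3 : α / (α + δ) + δ / (α + δ) = 1 := by field_simp
    linarith

section Aux

variable {Ω : Type*} [MeasureSpace Ω] [IsProbabilityMeasure (ℙ : Measure Ω)]
    (ν : ℕ → ℕ → Ω → ℕ)

/-- σ-algebra generated by rows `< i` -/
noncomputable def MS (i : ℕ) : MeasurableSpace Ω :=
  ⨆ p ∈ {q : ℕ × ℕ | q.1 < i}, MeasurableSpace.comap (fun ω => ν p.1 p.2 ω) inferInstance

/-- σ-algebra generated by row `i` -/
noncomputable def MT (i : ℕ) : MeasurableSpace Ω :=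
  ⨆ p ∈ {q : ℕ × ℕ | q.1 = i}, MeasurableSpace.comap (fun ω => ν p.1 p.2 ω) inferInstance

omit [IsProbabilityMeasure (ℙ : Measure Ω)] in
lemma measurable_MS_gamma
    (Γ : ℕ → Ω → ℕ) (ℓ : ℕ) (hΓ0 : ∀ ω, Γ 0 ω = ℓ)
    (hΓ : ∀ n ω, Γ (n + 1) ω = ∑ k ∈ Finset.range (Γ n ω), ν n (k + 1) ω) :
    ∀ i, Measurable[MS ν i] (Γ i) := by
  intro i
  induction i with
  | zero =>
    have : Γ 0 = fun _ => ℓ := funext hΓ0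
    rw [this]; exact measurable_const
  | succ j ih =>
    have hmono : MS ν j ≤ MS ν (j + 1) :=
      biSup_mono (fun p hp => Nat.lt_succ_of_lt hp)
    have hΓj : Measurable[MS ν (j+1)] (Γ j) := ih.mono hmono le_rfl
    have hν : ∀ k, Measurable[MS ν (j+1)] (ν j (k+1)) := by
      intro k
      refine Measurable.of_comap_le ?_
      exact le_biSup (f := fun p : ℕ × ℕ =>
        MeasurableSpace.comap (fun ω => ν p.1 p.2 ω) inferInstance)
        (i := (j, k+1)) (Nat.lt_succ_self j)
    have : Γ (j+1) = fun ω => ∑ k ∈ Finset.range (Γ j ω), ν j (k+1) ω := funext (hΓ j)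
    rw [this]
    exact meas_sum_range' (m := MS ν (j+1)) _ hΓj _ hν

omit [IsProbabilityMeasure (ℙ : Measure Ω)] in
lemma measurable_gamma (hmeas : ∀ n k, Measurable (ν n k))
    (Γ : ℕ → Ω → ℕ) (ℓ : ℕ) (hΓ0 : ∀ ω, Γ 0 ω = ℓ)
    (hΓ : ∀ n ω, Γ (n + 1) ω = ∑ k ∈ Finset.range (Γ n ω), ν n (k + 1) ω) :
    ∀ i, Measurable (Γ i) := by
  intro i
  refine (measurable_MS_gamma ν Γ ℓ hΓ0 hΓ i).mono ?_ le_rfl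
  exact iSup₂_le fun p hp => (hmeas p.1 p.2).comap_le

lemma indep_gamma (hmeas : ∀ n k, Measurable (ν n k))
    (hindep : iIndepFun (fun p : ℕ × ℕ => ν p.1 p.2) ℙ)
    (Γ : ℕ → Ω → ℕ) (ℓ : ℕ) (hΓ0 : ∀ ω, Γ 0 ω = ℓ)
    (hΓ : ∀ n ω, Γ (n + 1) ω = ∑ k ∈ Finset.range (Γ n ω), ν n (k + 1) ω)
    (i : ℕ) (Y : Ω → ℝ) (hY : Measurable[MT ν i] Y) :
    IndepFun (Γ i) Y ℙ := by
  have hii := hindep.iIndep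
  have hIndep : Indep (MS ν i) (MT ν i) ℙ := by
    have hdisj : Disjoint {q : ℕ × ℕ | q.1 < i} {q : ℕ × ℕ | q.1 = i} := by
      rw [Set.disjoint_left]
      rintro ⟨a, b⟩ ha hb
      simp only [Set.mem_setOf_eq] at ha hb
      omega
    exact indep_iSup_of_disjoint
      (m := fun p : ℕ × ℕ => MeasurableSpace.comap (fun ω => ν p.1 p.2 ω) inferInstance)
      (S := {q : ℕ × ℕ | q.1 < i}) (T := {q : ℕ × ℕ | q.1 = i})
      (fun p => (hmeas p.1 p.2).comap_le) hii hdisj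
  rw [IndepFun_iff_Indep]
  exact indep_of_indep_of_le_left
    (indep_of_indep_of_le_right hIndep hY.comap_le)
    ((measurable_MS_gamma ν Γ ℓ hΓ0 hΓ i).comap_le)

lemma prod_row (hmeas : ∀ n k, Measurable (ν n k))
    (hindep : iIndepFun (fun p : ℕ × ℕ => ν p.1 p.2) ℙ)
    (hid : ∀ n k, IdentDistrib (ν n k) (ν n 0) ℙ ℙ)
    (i : ℕ) (lam : ℝ)
    (hint : Integrable (fun ω => Real.exp (lam * ν i 0 ω)) ℙ) :
    ∀ g : ℕ, Integrable (fun ω => ∏ k ∈ Finset.range g, Real.exp (lam * ν i (k+1) ω)) ℙ ∧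
      (∫ ω, ∏ k ∈ Finset.range g, Real.exp (lam * ν i (k+1) ω)) =
        (∫ ω, Real.exp (lam * ν i 0 ω)) ^ g := by
  set F : ℕ × ℕ → Ω → ℝ := fun p ω => Real.exp (lam * ν p.1 p.2 ω) with hF
  have hexpmeas : Measurable (fun x : ℕ => Real.exp (lam * x)) := measurable_from_top
  have hFindep : iIndepFun F ℙ :=
    hindep.comp (fun _ => fun x : ℕ => Real.exp (lam * x)) (fun _ => hexpmeas)
  have hFmeas : ∀ p : ℕ × ℕ, Measurable (F p) :=
    fun p => hexpmeas.comp (hmeas p.1 p.2)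
  have hFid : ∀ k, IdentDistrib (F (i, k)) (fun ω => Real.exp (lam * ν i 0 ω)) ℙ ℙ :=
    fun k => (hid i k).comp hexpmeas
  have hFint : ∀ k, Integrable (F (i, k)) ℙ :=
    fun k => (hFid k).integrable_iff.mpr hint
  have hFval : ∀ k, (∫ ω, F (i, k) ω) = ∫ ω, Real.exp (lam * ν i 0 ω) :=
    fun k => (hFid k).integral_eq
  intro g
  induction g with
  | zero => simp
  | succ g ih =>
    have hinj : Set.InjOn (fun k => (i, k+1)) (Finset.range g) := by
      intro a _ b _ h
      simpa using h
    have hrw : (fun ω => ∏ k ∈ Finset.range g, Real.exp (lam * ν i (k+1) ω))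
        = ∏ p ∈ (Finset.range g).image (fun k => (i, k+1)), F p := by
      funext ω
      rw [Finset.prod_apply]
      rw [Finset.prod_image (fun a ha b hb h => hinj ha hb h)]
    have hnotmem : (i, g+1) ∉ (Finset.range g).image (fun k => (i, k+1)) := by
      simp only [Finset.mem_image, Finset.mem_range]
      rintro ⟨a, ha, h⟩
      simp only [Prod.mk.injEq] at h
      omega
    have hIF : IndepFun (fun ω => ∏ k ∈ Finset.range g, Real.exp (lam * ν i (k+1) ω))
        (F (i, g+1)) ℙ := by
      rw [hrw]
      exact hFindep.indepFun_finsetProd_of_notMem hFmeas hnotmem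
    have hprodrw : (fun ω => ∏ k ∈ Finset.range (g+1), Real.exp (lam * ν i (k+1) ω))
        = fun ω => (∏ k ∈ Finset.range g, Real.exp (lam * ν i (k+1) ω)) * F (i, g+1) ω := by
      funext ω; rw [Finset.prod_range_succ]
    constructor
    · rw [hprodrw]
      exact hIF.integrable_mul ih.1 (hFint (g+1))
    · rw [hprodrw]
      rw [show (fun ω => (∏ k ∈ Finset.range g, Real.exp (lam * ν i (k+1) ω)) * F (i, g+1) ω)
          = (fun ω => (∏ k ∈ Finset.range g, Real.exp (lam * ν i (k+1) ω))) * F (i, g+1) from rfl]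
      rw [hIF.integral_mul_eq_mul_integral ih.1.aestronglyMeasurable (hFint (g+1)).aestronglyMeasurable]
      rw [ih.2, hFval (g+1), pow_succ]

lemma step_bound (hmeas : ∀ n k, Measurable (ν n k))
    (hindep : iIndepFun (fun p : ℕ × ℕ => ν p.1 p.2) ℙ)
    (hid : ∀ n k, IdentDistrib (ν n k) (ν n 0) ℙ ℙ)
    (Γ : ℕ → Ω → ℕ) (ℓ : ℕ) (hΓ0 : ∀ ω, Γ 0 ω = ℓ)
    (hΓ : ∀ n ω, Γ (n + 1) ω = ∑ k ∈ Finset.range (Γ n ω), ν n (k + 1) ω)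
    (i : ℕ) (lam c : ℝ) (hlam : 0 < lam)
    (hint : Integrable (fun ω => Real.exp (lam * ν i 0 ω)) ℙ)
    (hmgfc : (∫ ω, Real.exp (lam * ν i 0 ω)) ≤ Real.exp c) (hc : 0 ≤ c)
    (t x : ℝ) (ht : 0 ≤ t) :
    (ℙ {ω | (Γ i ω : ℝ) ≤ t ∧ x ≤ (Γ (i+1) ω : ℝ)}).toReal
      ≤ Real.exp (-lam * x + c * t) := by
  have hΓmeas := measurable_gamma ν hmeas Γ ℓ hΓ0 hΓ
  set M : ℝ := ∫ ω, Real.exp (lam * ν i 0 ω) with hM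
  have hM0 : 0 ≤ M := integral_nonneg (fun ω => (Real.exp_pos _).le)
  set s : Finset ℕ := Finset.range (Nat.floor t + 1) with hs
  set B : ℕ → Set Ω := fun g => {ω | Γ i ω = g} with hB
  set A : ℕ → Set Ω := fun g => {ω | Γ i ω = g ∧ x ≤ (Γ (i+1) ω : ℝ)} with hA
  have hBmeas : ∀ g, MeasurableSet (B g) := fun g => (hΓmeas i) (measurableSet_singleton g)
  have hΓcast : ∀ j, Measurable (fun ω => (Γ j ω : ℝ)) :=
    fun j => (measurable_from_top (f := (Nat.cast : ℕ → ℝ))).comp (hΓmeas j)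
  have hAmeas : ∀ g, MeasurableSet (A g) := by
    intro g
    exact (hBmeas g).inter ((hΓcast (i+1)) measurableSet_Ici)
  -- key per-g bound
  have key : ∀ g ∈ s, (ℙ (A g)).toReal ≤
      (Real.exp (lam * x))⁻¹ * ((ℙ (B g)).toReal * M ^ g) := by
    intro g hg
    set Y : Ω → ℝ := fun ω => ∏ k ∈ Finset.range g, Real.exp (lam * ν i (k+1) ω) with hY
    obtain ⟨hYint, hYval⟩ := prod_row ν hmeas hindep hid i lam hint g
    have hYnonneg : ∀ ω, 0 ≤ Y ω :=
      fun ω => Finset.prod_nonneg (fun k _ => (Real.exp_pos _).le)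
    have hYMT : Measurable[MT ν i] Y := by
      refine Finset.measurable_prod _ (fun k _ => ?_)
      have h1 : Measurable[MeasurableSpace.comap (fun ω => ν i (k+1) ω) inferInstance]
          (fun ω => ν i (k+1) ω) := Measurable.of_comap_le le_rfl
      have h2 : MeasurableSpace.comap (fun ω => ν i (k+1) ω) inferInstance ≤ MT ν i :=
        le_biSup (f := fun p : ℕ × ℕ =>
          MeasurableSpace.comap (fun ω => ν p.1 p.2 ω) inferInstance)
          (i := (i, k+1)) rfl
      exact ((measurable_from_top (f := fun z : ℕ => Real.exp (lam * z))).comp h1).mono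
        h2 le_rfl
    have hIndepY : IndepFun (Γ i) Y ℙ := indep_gamma ν hmeas hindep Γ ℓ hΓ0 hΓ i Y hYMT
    set φ : ℕ → ℝ := fun z => if z = g then 1 else 0 with hφ
    set X : Ω → ℝ := fun ω => φ (Γ i ω) with hX
    have hXind : X = (B g).indicator (fun _ => (1:ℝ)) := by
      funext ω
      by_cases h : Γ i ω = g
      · simp [hX, hφ, h, hB]
      · simp [hX, hφ, h, hB]
    have hXint : Integrable X ℙ := by
      rw [hXind]; exact (integrable_const (1:ℝ)).indicator (hBmeas g)
    have hIndepXY : IndepFun X Y ℙ :=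
      hIndepY.comp (measurable_from_top (f := φ)) measurable_id
    have hXYint : Integrable (fun ω => X ω * Y ω) ℙ := hIndepXY.integrable_mul hXint hYint
    have hpt : ∀ ω, (A g).indicator (fun _ => Real.exp (lam * x)) ω ≤ X ω * Y ω := by
      intro ω
      by_cases h : ω ∈ A g
      · rw [Set.indicator_of_mem h]
        obtain ⟨h1, h2⟩ := h
        have hXω : X ω = 1 := by simp [hX, hφ, h1]
        have hYω : Real.exp (lam * x) ≤ Y ω := by
          have hYeq : Y ω = Real.exp (lam * (Γ (i+1) ω : ℝ)) := by
            show (∏ k ∈ Finset.range g, Real.exp (lam * (ν i (k+1) ω : ℝ))) = _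
            rw [← Real.exp_sum]
            congr 1
            rw [← Finset.mul_sum]
            congr 1
            rw [hΓ i ω, h1]
            push_cast
            rfl
          rw [hYeq]
          exact Real.exp_le_exp.mpr (by nlinarith)
        rw [hXω, one_mul]; exact hYω
      · rw [Set.indicator_of_notMem h]
        exact mul_nonneg (by by_cases h' : Γ i ω = g <;> simp [hX, hφ, h']) (hYnonneg ω)
    have hmono := integral_mono
      ((integrable_const (Real.exp (lam * x))).indicator (hAmeas g)) hXYint hpt
    rw [integral_indicator_const _ (hAmeas g)] at hmono
    have hXYval : (∫ ω, X ω * Y ω) = (ℙ (B g)).toReal * M ^ g := by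
      rw [show (fun ω => X ω * Y ω) = X * Y from rfl]
      rw [hIndepXY.integral_mul_eq_mul_integral hXint.aestronglyMeasurable hYint.aestronglyMeasurable]
      have h1 : (∫ ω, X ω) = (ℙ (B g)).toReal := by
        rw [hXind, integral_indicator_const _ (hBmeas g)]; simp [measureReal_def]
      have h2 : (∫ ω, Y ω) = M ^ g := hYval
      rw [h1, h2]
    rw [hXYval] at hmono
    simp only [smul_eq_mul] at hmono
    calc (ℙ (A g)).toReal ≤ ((ℙ (B g)).toReal * M ^ g) / Real.exp (lam * x) := by
          rw [le_div_iff₀ (Real.exp_pos _)]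
          rw [measureReal_def] at hmono; nlinarith [hmono]
      _ = (Real.exp (lam * x))⁻¹ * ((ℙ (B g)).toReal * M ^ g) := by
          rw [div_eq_inv_mul]
  have hsub : {ω | (Γ i ω : ℝ) ≤ t ∧ x ≤ (Γ (i+1) ω : ℝ)} ⊆ ⋃ g ∈ s, A g := by
    intro ω hω
    obtain ⟨h1, h2⟩ := hω
    have hgs : Γ i ω ∈ s := by
      rw [hs, Finset.mem_range, Nat.lt_succ_iff]
      exact Nat.le_floor h1
    exact Set.mem_biUnion hgs ⟨rfl, h2⟩
  have hPle : ℙ {ω | (Γ i ω : ℝ) ≤ t ∧ x ≤ (Γ (i+1) ω : ℝ)} ≤ ∑ g ∈ s, ℙ (A g) :=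
    (measure_mono hsub).trans (measure_biUnion_finset_le s A)
  have hfin : ∀ g ∈ s, ℙ (A g) ≠ ⊤ := fun g _ => (measure_lt_top ℙ _).ne
  have h2 : (ℙ {ω | (Γ i ω : ℝ) ≤ t ∧ x ≤ (Γ (i+1) ω : ℝ)}).toReal
      ≤ ∑ g ∈ s, (ℙ (A g)).toReal := by
    rw [← ENNReal.toReal_sum hfin]
    exact ENNReal.toReal_mono (ENNReal.sum_ne_top.mpr hfin) hPle
  refine h2.trans ?_
  have h3 : ∑ g ∈ s, (ℙ (A g)).toReal
      ≤ ∑ g ∈ s, (Real.exp (lam*x))⁻¹ * Real.exp (c*t) * (ℙ (B g)).toReal := by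
    refine Finset.sum_le_sum (fun g hg => (key g hg).trans ?_)
    have hgle : g ≤ Nat.floor t := by
      have := Finset.mem_range.mp hg; omega
    have hgt : (g:ℝ) ≤ t :=
      le_trans (by exact_mod_cast hgle) (Nat.floor_le ht)
    have hMg : M ^ g ≤ Real.exp (c * t) := by
      calc M ^ g ≤ (Real.exp c) ^ g := pow_le_pow_left₀ hM0 hmgfc g
        _ = Real.exp (c * g) := by rw [← Real.exp_nat_mul]; ring_nf
        _ ≤ Real.exp (c * t) := Real.exp_le_exp.mpr (by nlinarith)
    calc (Real.exp (lam*x))⁻¹ * ((ℙ (B g)).toReal * M ^ g)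
        ≤ (Real.exp (lam*x))⁻¹ * ((ℙ (B g)).toReal * Real.exp (c*t)) := by
          refine mul_le_mul_of_nonneg_left ?_ (inv_nonneg.mpr (Real.exp_pos _).le)
          exact mul_le_mul_of_nonneg_left hMg ENNReal.toReal_nonneg
      _ = (Real.exp (lam*x))⁻¹ * Real.exp (c*t) * (ℙ (B g)).toReal := by ring
  refine h3.trans ?_
  have h4 : ∑ g ∈ s, (ℙ (B g)).toReal ≤ 1 := by
    have hd : (↑s : Set ℕ).Pairwise (Function.onFun (AEDisjoint ℙ) B) := by
      intro a _ b _ hab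
      refine Disjoint.aedisjoint ?_
      rw [Set.disjoint_left]
      intro ω ha hb
      simp only [hB, Set.mem_setOf_eq] at ha hb
      exact hab (ha.symm.trans hb)
    have h5 := sum_measure_le_measure_univ (fun g _ => (hBmeas g).nullMeasurableSet) hd
    rw [measure_univ] at h5
    have h6 : ∑ g ∈ s, (ℙ (B g)).toReal = (∑ g ∈ s, ℙ (B g)).toReal :=
      (ENNReal.toReal_sum (fun g _ => (measure_lt_top ℙ _).ne)).symm
    rw [h6]
    simpa using ENNReal.toReal_mono ENNReal.one_ne_top h5
  calc ∑ g ∈ s, (Real.exp (lam*x))⁻¹ * Real.exp (c*t) * (ℙ (B g)).toReal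
      = (Real.exp (lam*x))⁻¹ * Real.exp (c*t) * ∑ g ∈ s, (ℙ (B g)).toReal := by
        rw [← Finset.mul_sum]
    _ ≤ (Real.exp (lam*x))⁻¹ * Real.exp (c*t) * 1 := by
        refine mul_le_mul_of_nonneg_left h4 ?_
        positivity
    _ = Real.exp (-lam*x + c*t) := by
        rw [Real.exp_add, neg_mul, Real.exp_neg, mul_one]

end Aux

/-- Upper-tail inequality for inhomogeneous Galton–Watson processes
(Aïdékon–Hu–Shi / AHS19, Proposition 2.1): if `Γ_{n+1} = ∑_{k=1}^{Γ_n} ν_n^{(k)}` with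
i.i.d. offspring `ν_n^{(k)}` of mean `m_n ∈ (0,∞)`, independent of the past, `Γ_0 = ℓ`,
and for each `i < n` there is `λ_i > 0` with `E[e^{λ_i ν_i}] ≤ e^{α λ_i m_i}` (`α > 1`),
then for all `δ > 0`,
`P(Γ_n ≥ ℓ·max{1, (α+δ)^n max_{i<n} ∏_{j=i}^{n-1} m_j}) ≤
  n·exp(-(δℓ/(α+δ)) min_{i<n} λ_i + max_{i<n} λ_i)`. -/
theorem stmt12 {Ω : Type*} [MeasureSpace Ω] [IsProbabilityMeasure (ℙ : Measure Ω)]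
    (ν : ℕ → ℕ → Ω → ℕ) (hmeas : ∀ n k, Measurable (ν n k))
    (hindep : iIndepFun (fun p : ℕ × ℕ => ν p.1 p.2) ℙ)
    (hid : ∀ n k, IdentDistrib (ν n k) (ν n 0) ℙ ℙ)
    (Γ : ℕ → Ω → ℕ) (ℓ : ℕ) (hℓ : 1 ≤ ℓ)
    (hΓ0 : ∀ ω, Γ 0 ω = ℓ)
    (hΓ : ∀ n ω, Γ (n + 1) ω = ∑ k ∈ Finset.range (Γ n ω), ν n (k + 1) ω)
    (m : ℕ → ℝ) (hm : ∀ i, m i = ∫ ω, (ν i 0 ω : ℝ)) (hmpos : ∀ i, 0 < m i)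
    (α δ : ℝ) (hα : 1 < α) (hδ : 0 < δ)
    (n : ℕ) (hn : 1 ≤ n)
    (lam : ℕ → ℝ) (hlampos : ∀ i < n, 0 < lam i)
    (hint : ∀ i < n, Integrable (fun ω => Real.exp (lam i * ν i 0 ω)))
    (hmgf : ∀ i < n, (∫ ω, Real.exp (lam i * ν i 0 ω)) ≤ Real.exp (α * lam i * m i)) :
    (ℙ {ω | (ℓ : ℝ) * max 1 ((α + δ) ^ n *
          (Finset.range n).sup' (Finset.nonempty_range_iff.mpr (by omega))
            (fun i => ∏ j ∈ Finset.Ico i n, m j)) ≤ (Γ n ω : ℝ)}).toReal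
      ≤ n * Real.exp (-(δ * ℓ / (α + δ)) *
            ((Finset.range n).inf' (Finset.nonempty_range_iff.mpr (by omega)) lam) +
          (Finset.range n).sup' (Finset.nonempty_range_iff.mpr (by omega)) lam) := by
  have hβ0 : (0:ℝ) < α + δ := by linarith
  have hβ1 : (1:ℝ) < α + δ := by linarith
  have hℓR : (1:ℝ) ≤ (ℓ:ℝ) := by exact_mod_cast hℓ
  have hℓ0 : (0:ℝ) < (ℓ:ℝ) := by linarith
  -- threshold sequence
  set t : ℕ → ℝ := fun i =>
    if h : 0 < i then
      (ℓ:ℝ) * max 1 ((α + δ) ^ i *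
        (Finset.range i).sup' (Finset.nonempty_range_iff.mpr h.ne')
          (fun r => ∏ j ∈ Finset.Ico r i, m j))
    else (ℓ:ℝ) with hta
  have ht0 : t 0 = (ℓ:ℝ) := by simp [hta]
  have htge : ∀ i, (ℓ:ℝ) ≤ t i := by
    intro i
    by_cases h : 0 < i
    · have h1 : t i = (ℓ:ℝ) * max 1 ((α + δ) ^ i *
          (Finset.range i).sup' (Finset.nonempty_range_iff.mpr h.ne')
            (fun r => ∏ j ∈ Finset.Ico r i, m j)) := by
        simp only [hta]; rw [dif_pos h]
      rw [h1]
      nlinarith [le_max_left (1:ℝ) ((α + δ) ^ i *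
        (Finset.range i).sup' (Finset.nonempty_range_iff.mpr h.ne')
          (fun r => ∏ j ∈ Finset.Ico r i, m j))]
    · simp only [hta]; rw [dif_neg h]
  have htpos : ∀ i, (0:ℝ) < t i := fun i => lt_of_lt_of_le hℓ0 (htge i)
  -- one-step threshold growth
  have hF1 : ∀ i, (ℓ:ℝ) * max 1 ((α + δ) * (m i * (t i / ℓ))) ≤ t (i + 1) := by
    intro i
    cases i with
    | zero =>
      have h1 : t 1 = (ℓ:ℝ) * max 1 ((α + δ) ^ 1 *
          (Finset.range 1).sup' (Finset.nonempty_range_iff.mpr one_ne_zero)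
            (fun r => ∏ j ∈ Finset.Ico r 1, m j)) := by
        simp only [hta]; rw [dif_pos Nat.one_pos]
      have h2 : (Finset.range 1).sup' (Finset.nonempty_range_iff.mpr one_ne_zero)
          (fun r => ∏ j ∈ Finset.Ico r 1, m j) = m 0 := by
        have hico : Finset.Ico 0 1 = {0} := rfl
        apply le_antisymm
        · apply Finset.sup'_le
          intro r hr
          have hr0 : r = 0 := by simpa using hr
          subst hr0
          rw [hico, Finset.prod_singleton]
        · have h := Finset.le_sup' (f := fun r => ∏ j ∈ Finset.Ico r 1, m j)
            (b := 0) (by simp : (0:ℕ) ∈ Finset.range 1)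
          rwa [hico, Finset.prod_singleton] at h
      rw [h1, h2, ht0, pow_one, div_self hℓ0.ne', mul_one]
    | succ i =>
      have hi1 : 0 < i + 1 := Nat.succ_pos i
      have hi2 : 0 < i + 2 := by omega
      set P := (Finset.range (i+1)).sup' (Finset.nonempty_range_iff.mpr hi1.ne')
          (fun r => ∏ j ∈ Finset.Ico r (i+1), m j) with hP
      set P' := (Finset.range (i+2)).sup' (Finset.nonempty_range_iff.mpr hi2.ne')
          (fun r => ∏ j ∈ Finset.Ico r (i+2), m j) with hP'
      have ht1 : t (i+1) = (ℓ:ℝ) * max 1 ((α + δ) ^ (i+1) * P) := by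
        simp only [hta]; rw [dif_pos hi1]
      have ht2 : t (i+2) = (ℓ:ℝ) * max 1 ((α + δ) ^ (i+2) * P') := by
        simp only [hta]; rw [dif_pos hi2]
      -- P' ≥ m (i+1) * P
      obtain ⟨r0, hr0, hr0v⟩ := Finset.exists_mem_eq_sup'
        (Finset.nonempty_range_iff.mpr hi1.ne') (fun r => ∏ j ∈ Finset.Ico r (i+1), m j)
      have hr0le : r0 ≤ i + 1 := by
        have := Finset.mem_range.mp hr0; omega
      have hPval : P = ∏ j ∈ Finset.Ico r0 (i+1), m j := by rw [hP]; exact hr0v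
      have hkey1 : m (i+1) * P ≤ P' := by
        have h3 : (∏ j ∈ Finset.Ico r0 (i+2), m j)
            = (∏ j ∈ Finset.Ico r0 (i+1), m j) * m (i+1) :=
          Finset.prod_Ico_succ_top hr0le _
        have h4 : (∏ j ∈ Finset.Ico r0 (i+2), m j) ≤ P' := by
          rw [hP']
          exact Finset.le_sup' (fun r => ∏ j ∈ Finset.Ico r (i+2), m j)
            (Finset.mem_range.mpr (by omega))
        rw [h3] at h4
        rw [hPval]
        nlinarith [h4]
      have hkey2 : m (i+1) ≤ P' := by
        have h3 : (∏ j ∈ Finset.Ico (i+1) (i+2), m j) ≤ P' := by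
          rw [hP']
          exact Finset.le_sup' (fun r => ∏ j ∈ Finset.Ico r (i+2), m j)
            (Finset.mem_range.mpr (by omega))
        rwa [Nat.Ico_succ_singleton, Finset.prod_singleton] at h3
      have hpow1 : (1:ℝ) ≤ (α + δ) ^ (i+1) := one_le_pow₀ hβ1.le
      have hpow2 : (α + δ) ^ (i+2) = (α + δ) * (α + δ) ^ (i+1) := by ring
      have hPpos : 0 < P := by
        rw [hPval]; exact Finset.prod_pos (fun j _ => hmpos j)
      have hm1 : 0 < m (i+1) := hmpos (i+1)
      -- main inequality between the max-terms
      have hmax : (α + δ) * (m (i+1) * (t (i+1) / ℓ)) ≤ (α + δ) ^ (i+2) * P' := by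
        have htdiv : t (i+1) / ℓ = max 1 ((α + δ) ^ (i+1) * P) := by
          rw [ht1, mul_div_cancel_left₀ _ hℓ0.ne']
        rw [htdiv]
        rcases le_total 1 ((α + δ) ^ (i+1) * P) with h | h
        · rw [max_eq_right h]
          have heq : (α + δ) * (m (i+1) * ((α + δ) ^ (i+1) * P))
              = (α + δ) ^ (i+2) * (m (i+1) * P) := by ring
          rw [heq]
          exact mul_le_mul_of_nonneg_left hkey1 (pow_nonneg hβ0.le _)
        · rw [max_eq_left h]
          have h5 : (α + δ) * (m (i+1) * 1) ≤ (α + δ) ^ (i+2) * m (i+1) := by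
            rw [hpow2]
            nlinarith [mul_le_mul_of_nonneg_left hpow1 (mul_pos hβ0 hm1).le]
          exact h5.trans (mul_le_mul_of_nonneg_left hkey2 (pow_nonneg hβ0.le _))
      rw [ht2]
      exact mul_le_mul_of_nonneg_left (max_le_max le_rfl hmax) hℓ0.le
  -- recursion inequality
  have hrec : ∀ i, α * m i * t i + δ * ℓ / (α + δ) ≤ t (i + 1) := by
    intro i
    have hq : 0 < m i * (t i / ℓ) :=
      mul_pos (hmpos i) (div_pos (htpos i) hℓ0)
    have h1 := helper_ineq' hα hδ hq
    have h2 : α * m i * t i + δ * ℓ / (α + δ)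
        = (ℓ:ℝ) * (α * (m i * (t i / ℓ)) + δ / (α + δ)) := by
      field_simp
    rw [h2]
    refine le_trans ?_ (hF1 i)
    exact mul_le_mul_of_nonneg_left h1 hℓ0.le
  -- union bound decomposition
  have haux : ∀ k (ω : Ω), t (k+1) ≤ (Γ (k+1) ω : ℝ) →
      ∃ i, i ≤ k ∧ (Γ i ω : ℝ) ≤ t i ∧ t (i+1) ≤ (Γ (i+1) ω : ℝ) := by
    intro k
    induction k with
    | zero =>
      intro ω h
      exact ⟨0, le_rfl, by rw [hΓ0 ω, ht0], h⟩
    | succ k ih =>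
      intro ω h
      by_cases h' : (Γ (k+1) ω : ℝ) ≤ t (k+1)
      · exact ⟨k+1, le_rfl, h', h⟩
      · obtain ⟨i, hi, h1, h2⟩ := ih ω (le_of_lt (not_le.mp h'))
        exact ⟨i, by omega, h1, h2⟩
  have hunion : ∀ ω, t n ≤ (Γ n ω : ℝ) →
      ∃ i, i < n ∧ (Γ i ω : ℝ) ≤ t i ∧ t (i+1) ≤ (Γ (i+1) ω : ℝ) := by
    intro ω h
    obtain ⟨k, hk⟩ : ∃ k, n = k + 1 := ⟨n - 1, by omega⟩
    obtain ⟨i, hi, h1, h2⟩ := haux k ω (by rw [← hk]; exact h)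
    exact ⟨i, by omega, h1, h2⟩
  -- the events
  set D : ℕ → Set Ω := fun i => {ω | (Γ i ω : ℝ) ≤ t i ∧ t (i+1) ≤ (Γ (i+1) ω : ℝ)} with hD
  have htn : t n = (ℓ:ℝ) * max 1 ((α + δ) ^ n *
      (Finset.range n).sup' (Finset.nonempty_range_iff.mpr (by omega))
        (fun i => ∏ j ∈ Finset.Ico i n, m j)) := by
    simp only [hta]; rw [dif_pos (by omega : 0 < n)]
  have hset : {ω | (ℓ : ℝ) * max 1 ((α + δ) ^ n *
          (Finset.range n).sup' (Finset.nonempty_range_iff.mpr (by omega))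
            (fun i => ∏ j ∈ Finset.Ico i n, m j)) ≤ (Γ n ω : ℝ)}
      = {ω | t n ≤ (Γ n ω : ℝ)} := by rw [htn]
  rw [hset]
  have hsub : {ω | t n ≤ (Γ n ω : ℝ)} ⊆ ⋃ i ∈ Finset.range n, D i := by
    intro ω hω
    obtain ⟨i, hi, h1, h2⟩ := hunion ω hω
    exact Set.mem_biUnion (Finset.mem_range.mpr hi) ⟨h1, h2⟩
  have hPle : ℙ {ω | t n ≤ (Γ n ω : ℝ)} ≤ ∑ i ∈ Finset.range n, ℙ (D i) :=
    (measure_mono hsub).trans (measure_biUnion_finset_le _ D)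
  have hfin : ∀ i ∈ Finset.range n, ℙ (D i) ≠ ⊤ := fun i _ => (measure_lt_top ℙ _).ne
  have h2 : (ℙ {ω | t n ≤ (Γ n ω : ℝ)}).toReal
      ≤ ∑ i ∈ Finset.range n, (ℙ (D i)).toReal := by
    rw [← ENNReal.toReal_sum hfin]
    exact ENNReal.toReal_mono (ENNReal.sum_ne_top.mpr hfin) hPle
  refine h2.trans ?_
  -- abbreviations
  set lmin := (Finset.range n).inf' (Finset.nonempty_range_iff.mpr (by omega)) lam with hlmin
  set lmax := (Finset.range n).sup' (Finset.nonempty_range_iff.mpr (by omega)) lam with hlmax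
  have hlmaxpos : 0 < lmax :=
    lt_of_lt_of_le (hlampos 0 (by omega)) (Finset.le_sup' lam (Finset.mem_range.mpr (by omega)))
  have hterm : ∀ i ∈ Finset.range n, (ℙ (D i)).toReal
      ≤ Real.exp (-(δ * ℓ / (α + δ)) * lmin + lmax) := by
    intro i hi
    have hin : i < n := Finset.mem_range.mp hi
    have hci : (0:ℝ) ≤ α * lam i * m i :=
      (mul_pos (mul_pos (lt_trans zero_lt_one hα) (hlampos i hin)) (hmpos i)).le
    have hsb := step_bound ν hmeas hindep hid Γ ℓ hΓ0 hΓ i (lam i) (α * lam i * m i)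
      (hlampos i hin) (hint i hin) (hmgf i hin) hci (t i) (t (i+1)) (htpos i).le
    refine hsb.trans (Real.exp_le_exp.mpr ?_)
    have h3 := hrec i
    have hlq := hlampos i hin
    have hlmin_le : lmin ≤ lam i := Finset.inf'_le lam hi
    have hstep1 : -(lam i) * t (i+1) + (α * lam i * m i) * t i
        ≤ -(lam i) * (δ * ℓ / (α + δ)) := by nlinarith
    have hpos : 0 < δ * ℓ / (α + δ) := by positivity
    have hstep2 : -(lam i) * (δ * ℓ / (α + δ)) ≤ -(δ * ℓ / (α + δ)) * lmin := by
      nlinarith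
    linarith
  calc ∑ i ∈ Finset.range n, (ℙ (D i)).toReal
      ≤ ∑ i ∈ Finset.range n, Real.exp (-(δ * ℓ / (α + δ)) * lmin + lmax) :=
        Finset.sum_le_sum hterm
    _ = n * Real.exp (-(δ * ℓ / (α + δ)) * lmin + lmax) := by
        rw [Finset.sum_const, Finset.card_range, nsmul_eq_mul]
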